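/- Fix z ∈ ℂ and m, m' ∈ ℂ. Let f : ℝ → ℂ solve −f'' + (p+q)·f = z²·f on ℝ and coincide, together with its first derivative, with θ(·,z) + m·φ(·,z) on [t,∞). Then the Wronskian-type quantity w := f'(0) − m'·f(0) satisfies w = (m − m') − ∫₀ᵗ q(x)·(θ(x,z) + m'·φ(x,z))·f(x) dx. -/

import Mathlib

open MeasureTheory

open Set

lemma fubini_tri (t : ℝ) (a b : ℝ → ℂ)
    (ha : IntegrableOn a (Ioc 0 t)) (hb : IntegrableOn b (Ioc 0 t)) :
    ∫ x in Ioc (0:ℝ) t, a x * ∫ s in Ioc (0:ℝ) x, b s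
      = ∫ s in Ioc (0:ℝ) t, (∫ x in Ioc s t, a x) * b s := by
  set μ := volume.restrict (Ioc (0:ℝ) t) with hμ
  set T : Set (ℝ × ℝ) := {q : ℝ × ℝ | q.2 ≤ q.1} with hT
  have hTm : MeasurableSet T := measurableSet_le measurable_snd measurable_fst
  set F : ℝ × ℝ → ℂ := T.indicator (fun q => a q.1 * b q.2) with hF
  have hFint : Integrable F (μ.prod μ) := (ha.mul_prod hb).indicator hTm
  have swap : ∫ x, (∫ s, F (x, s) ∂μ) ∂μ = ∫ s, (∫ x, F (x, s) ∂μ) ∂μ :=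
    MeasureTheory.integral_integral_swap (f := fun x s => F (x, s)) hFint
  have L : ∫ x in Ioc (0:ℝ) t, a x * ∫ s in Ioc (0:ℝ) x, b s
      = ∫ x, (∫ s, F (x, s) ∂μ) ∂μ := by
    rw [hμ]
    refine setIntegral_congr_fun measurableSet_Ioc (fun x hx => ?_)
    have h1 : (fun s => F (x, s)) = (Iic x).indicator (fun s => a x * b s) := by
      funext s
      simp [hF, hT, Set.indicator_apply]
    rw [h1, setIntegral_indicator measurableSet_Iic, Set.Ioc_inter_Iic,
      min_eq_right hx.2, MeasureTheory.integral_const_mul]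
  have R : ∫ s, (∫ x, F (x, s) ∂μ) ∂μ
      = ∫ s in Ioc (0:ℝ) t, (∫ x in Ioc s t, a x) * b s := by
    rw [hμ]
    refine setIntegral_congr_fun measurableSet_Ioc (fun s hs => ?_)
    have h1 : (fun x => F (x, s)) = (Ici s).indicator (fun x => a x * b s) := by
      funext x
      simp [hF, hT, Set.indicator_apply]
    have h2 : Ioc (0:ℝ) t ∩ Ici s = Icc s t := by
      ext x
      simp only [mem_inter_iff, mem_Ioc, mem_Ici, mem_Icc]
      constructor
      · rintro ⟨⟨_, h⟩, h'⟩; exact ⟨h', h⟩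
      · rintro ⟨h', h⟩; exact ⟨⟨lt_of_lt_of_le hs.1 h', h⟩, h'⟩
    rw [h1, setIntegral_indicator measurableSet_Ici, h2,
      integral_Icc_eq_integral_Ioc, MeasureTheory.integral_mul_const]
  rw [L, swap, R]

lemma parts (t : ℝ) (ht : 0 ≤ t) (u u' G g : ℝ → ℂ) (c : ℂ)
    (hu : ∀ x, HasDerivAt u (u' x) x)
    (hu' : IntervalIntegrable u' volume 0 t)
    (hg : IntervalIntegrable g volume 0 t)
    (hG : ∀ x ∈ Set.Icc (0:ℝ) t, G x = c + ∫ s in (0:ℝ)..x, g s) :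
    u t * G t - u 0 * G 0
      = (∫ x in (0:ℝ)..t, u' x * G x) + ∫ x in (0:ℝ)..t, u x * g x := by
  have hucont : Continuous u := continuous_iff_continuousAt.2 fun x => (hu x).continuousAt
  set P : ℝ → ℂ := fun x => ∫ s in (0:ℝ)..x, g s with hP
  have hPcont : ContinuousOn P (uIcc 0 t) := by
    refine intervalIntegral.continuousOn_primitive_interval ?_
    rw [uIcc_of_le ht]
    exact (intervalIntegrable_iff_integrableOn_Icc_of_le ht).1 hg
  have hFTC : ∀ s ∈ Set.Icc (0:ℝ) t, ∫ y in s..t, u' y = u t - u s := by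
    intro s hs
    refine intervalIntegral.integral_eq_sub_of_hasDerivAt (fun y _ => hu y) ?_
    exact hu'.mono_set (by rw [uIcc_of_le hs.2, uIcc_of_le ht]; exact Icc_subset_Icc hs.1 le_rfl)
  have haI : IntegrableOn u' (Ioc 0 t) := (intervalIntegrable_iff_integrableOn_Ioc_of_le ht).1 hu'
  have hbI : IntegrableOn g (Ioc 0 t) := (intervalIntegrable_iff_integrableOn_Ioc_of_le ht).1 hg
  have hug : IntervalIntegrable (fun s => u s * g s) volume 0 t :=
    hg.continuousOn_mul hucont.continuousOn
  have hcg : IntervalIntegrable (fun s => u t * g s) volume 0 t := hg.const_mul _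
  have key : ∫ x in (0:ℝ)..t, u' x * P x = u t * P t - ∫ x in (0:ℝ)..t, u x * g x := by
    rw [intervalIntegral.integral_of_le ht]
    have step1 : (∫ x in Ioc (0:ℝ) t, u' x * P x)
        = ∫ s in Ioc (0:ℝ) t, (∫ x in Ioc s t, u' x) * g s := by
      rw [← fubini_tri t u' g haI hbI]
      refine setIntegral_congr_fun measurableSet_Ioc fun x hx => ?_
      rw [hP]
      simp only []
      rw [intervalIntegral.integral_of_le hx.1.le]
    have step2 : (∫ s in Ioc (0:ℝ) t, (∫ x in Ioc s t, u' x) * g s)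
        = ∫ s in Ioc (0:ℝ) t, (u t - u s) * g s := by
      refine setIntegral_congr_fun measurableSet_Ioc fun s hs => ?_
      rw [← intervalIntegral.integral_of_le hs.2, hFTC s ⟨hs.1.le, hs.2⟩]
    rw [step1, step2, ← intervalIntegral.integral_of_le ht]
    calc ∫ s in (0:ℝ)..t, (u t - u s) * g s
        = ∫ s in (0:ℝ)..t, (u t * g s - u s * g s) :=
          intervalIntegral.integral_congr fun s _ => by ring
      _ = (∫ s in (0:ℝ)..t, u t * g s) - ∫ s in (0:ℝ)..t, u s * g s :=
          intervalIntegral.integral_sub hcg hug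
      _ = u t * P t - ∫ s in (0:ℝ)..t, u s * g s := by
          rw [intervalIntegral.integral_const_mul]
  have hsplit : ∫ x in (0:ℝ)..t, u' x * G x
      = (∫ x in (0:ℝ)..t, u' x * c) + ∫ x in (0:ℝ)..t, u' x * P x := by
    rw [← intervalIntegral.integral_add (hu'.mul_const c) (hu'.mul_continuousOn hPcont)]
    refine intervalIntegral.integral_congr fun x hx => ?_
    rw [uIcc_of_le ht] at hx
    rw [hG x hx]; ring
  have h1 : ∫ x in (0:ℝ)..t, u' x * c = (u t - u 0) * c := by
    rw [intervalIntegral.integral_mul_const, hFTC 0 ⟨le_rfl, ht⟩]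
  have hGt := hG t ⟨ht, le_rfl⟩
  have hG0 := hG 0 ⟨le_rfl, ht⟩
  rw [intervalIntegral.integral_same] at hG0
  rw [hsplit, h1, key, hGt, hG0, hP]
  ring

lemma p_int (p : ℝ → ℝ) (hper : ∀ᵐ x ∂(volume : Measure ℝ), p (x + 1) = p x)
    (hpint : IntegrableOn p (Set.Icc 0 1)) (t : ℝ) (ht : 0 ≤ t) :
    IntervalIntegrable p volume 0 t := by
  have h01 : IntervalIntegrable p volume 0 1 :=
    (intervalIntegrable_iff_integrableOn_Icc_of_le zero_le_one).2 hpint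
  have hshift : ∀ c : ℝ, ∀ᵐ x ∂(volume : Measure ℝ), p (x + c + 1) = p (x + c) := fun c =>
    ((measurePreserving_add_right volume c).quasiMeasurePreserving.tendsto_ae).eventually hper
  have hmove : ∀ n : ℕ, ∀ᵐ x ∂(volume : Measure ℝ), p (x + n) = p x := by
    intro n
    induction n with
    | zero => simp
    | succ k ih =>
      filter_upwards [ih, hshift (k : ℝ)] with x h1 h2
      have e : x + ((k : ℕ) + 1 : ℕ) = x + (k : ℝ) + 1 := by push_cast; ring
      rw [e, h2, h1]
  have hseg : ∀ n : ℕ, IntervalIntegrable p volume n (n + 1) := by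
    intro n
    have h2 := h01.comp_sub_right (n : ℝ)
    have heq : ∀ᵐ x ∂(volume : Measure ℝ), p (x - n) = p x := by
      have h3 := ((measurePreserving_add_right volume
        (-(n : ℝ))).quasiMeasurePreserving.tendsto_ae).eventually (hmove n)
      filter_upwards [h3] with x h
      have e1 : x + -(n : ℝ) + n = x := by ring
      have e2 : x + -(n : ℝ) = x - n := by ring
      rw [e1, e2] at h
      exact h.symm
    have h4 : IntervalIntegrable p volume (0 + n) (1 + n) :=
      h2.congr_ae (ae_restrict_of_ae heq)
    have e3 : (0 : ℝ) + n = n := by ring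
    have e4 : (1 : ℝ) + n = n + 1 := by ring
    rwa [e3, e4] at h4
  have hup : ∀ n : ℕ, IntervalIntegrable p volume 0 n := by
    intro n
    induction n with
    | zero => simp [intervalIntegrable_iff]
    | succ k ih =>
      have := ih.trans (hseg k)
      have e : ((k : ℝ) + 1) = ((k + 1 : ℕ) : ℝ) := by push_cast; ring
      rwa [e] at this
  refine (hup ⌈t⌉₊).mono_set ?_
  rw [uIcc_of_le ht, uIcc_of_le (by positivity)]
  exact Icc_subset_Icc le_rfl (Nat.le_ceil t)

noncomputable section

/-- `y` together with its x-derivative `y'` solves `-y'' + p·y = z²·y` on `ℝ`,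
with `y'` locally absolutely continuous; this is encoded by requiring that `y'`
is everywhere the derivative of `y` and that `y'` is the integral of
`(p - z²)·y` (the equation holding a.e.). -/
def IsSol (p : ℝ → ℝ) (z : ℂ) (y y' : ℝ → ℂ) : Prop :=
  (∀ x : ℝ, HasDerivAt y (y' x) x) ∧
  (∀ x : ℝ, y' x = y' 0 + ∫ s in (0:ℝ)..x, ((p s : ℂ) - z ^ 2) * y s)

/-- Wronskian identity: if `f` solves `-f''+(p+q)f = z²f` and coincides (with
derivative) with `θ + mφ` on `[t,∞)`, then
`w := f'(0) − m'·f(0) = (m − m') − ∫₀ᵗ q(x)(θ(x)+m'φ(x))f(x)dx`. -/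
theorem statement_11
    (p q : ℝ → ℝ) (t : ℝ) (ht : 0 < t)
    (hper : ∀ᵐ x ∂(volume : Measure ℝ), p (x + 1) = p x)
    (hpint : IntegrableOn p (Set.Icc 0 1))
    (hq : Integrable q) (hqsupp : Function.support q ⊆ Set.Icc 0 t)
    (z m m' : ℂ)
    (θ φ θD φD : ℝ → ℂ)
    (hθ : IsSol p z θ θD) (hθ0 : θ 0 = 1) (hθD0 : θD 0 = 0)
    (hφ : IsSol p z φ φD) (hφ0 : φ 0 = 0) (hφD0 : φD 0 = 1)
    (f fD : ℝ → ℂ)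
    (hf : IsSol (fun x => p x + q x) z f fD)
    (hmatch : ∀ x : ℝ, t ≤ x → f x = θ x + m * φ x ∧ fD x = θD x + m * φD x)
    (w : ℂ) (hw : w = fD 0 - m' * f 0) :
    w = (m - m') - ∫ x in (0:ℝ)..t, (q x : ℂ) * (θ x + m' * φ x) * f x := by
  obtain ⟨hθd, hθi⟩ := hθ
  obtain ⟨hφd, hφi⟩ := hφ
  obtain ⟨hfd, hfi⟩ := hf
  set ψ : ℝ → ℂ := fun x => θ x + m' * φ x with hψ
  set ψD : ℝ → ℂ := fun x => θD x + m' * φD x with hψDdef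
  -- continuity of the solutions
  have hθc : Continuous θ := continuous_iff_continuousAt.2 fun x => (hθd x).continuousAt
  have hφc : Continuous φ := continuous_iff_continuousAt.2 fun x => (hφd x).continuousAt
  have hfc : Continuous f := continuous_iff_continuousAt.2 fun x => (hfd x).continuousAt
  have hψc : Continuous ψ := hθc.add (continuous_const.mul hφc)
  -- base integrability
  have hpI : IntervalIntegrable p volume 0 t := p_int p hper hpint t ht.le
  have hqI : IntervalIntegrable q volume 0 t := hq.intervalIntegrable
  have hpC : IntervalIntegrable (fun x => ((p x : ℂ) - z ^ 2)) volume 0 t :=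
    IntervalIntegrable.sub ⟨hpI.1.ofReal, hpI.2.ofReal⟩ intervalIntegrable_const
  have hpqC : IntervalIntegrable (fun x => (((p x + q x : ℝ) : ℂ) - z ^ 2)) volume 0 t := by
    have h2 := hpI.add hqI
    exact IntervalIntegrable.sub ⟨h2.1.ofReal, h2.2.ofReal⟩ intervalIntegrable_const
  set gθ : ℝ → ℂ := fun x => ((p x : ℂ) - z ^ 2) * θ x with hgθ
  set gφ : ℝ → ℂ := fun x => ((p x : ℂ) - z ^ 2) * φ x with hgφ
  set gψ : ℝ → ℂ := fun x => ((p x : ℂ) - z ^ 2) * ψ x with hgψ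
  set gf : ℝ → ℂ := fun x => (((p x + q x : ℝ) : ℂ) - z ^ 2) * f x with hgf
  have hgθI : IntervalIntegrable gθ volume 0 t := hpC.mul_continuousOn hθc.continuousOn
  have hgφI : IntervalIntegrable gφ volume 0 t := hpC.mul_continuousOn hφc.continuousOn
  have hgψI : IntervalIntegrable gψ volume 0 t := hpC.mul_continuousOn hψc.continuousOn
  have hgfI : IntervalIntegrable gf volume 0 t := hpqC.mul_continuousOn hfc.continuousOn
  -- derivative of ψ
  have hψd : ∀ x, HasDerivAt ψ (ψD x) x := fun x => (hθd x).add ((hφd x).const_mul m')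
  -- integral identity for ψD on [0,t]
  have hψDi : ∀ x ∈ Set.Icc (0:ℝ) t, ψD x = ψD 0 + ∫ s in (0:ℝ)..x, gψ s := by
    intro x hx
    have hsub : uIcc 0 x ⊆ uIcc 0 t := by
      rw [uIcc_of_le hx.1, uIcc_of_le ht.le]; exact Icc_subset_Icc le_rfl hx.2
    have h1 : ∫ s in (0:ℝ)..x, gψ s
        = (∫ s in (0:ℝ)..x, gθ s) + m' * ∫ s in (0:ℝ)..x, gφ s := by
      rw [← intervalIntegral.integral_const_mul, ← intervalIntegral.integral_add
        (hgθI.mono_set hsub) ((hgφI.mono_set hsub).const_mul m')]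
      refine intervalIntegral.integral_congr fun s _ => ?_
      simp only [hgθ, hgφ, hgψ, hψ]
      ring
    simp only [hψDdef]
    rw [hθi x, hφi x, h1]
    ring
  -- continuity and integrability of the derivative functions on [0,t]
  have primCont : ∀ g : ℝ → ℂ, IntervalIntegrable g volume 0 t →
      ContinuousOn (fun x => ∫ s in (0:ℝ)..x, g s) (uIcc 0 t) := by
    intro g hg
    refine intervalIntegral.continuousOn_primitive_interval ?_
    rw [uIcc_of_le ht.le]
    exact (intervalIntegrable_iff_integrableOn_Icc_of_le ht.le).1 hg
  have hθDI : IntervalIntegrable θD volume 0 t := by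
    refine ContinuousOn.intervalIntegrable ?_
    exact (continuousOn_const.add (primCont gθ hgθI)).congr fun x _ => hθi x
  have hφDI : IntervalIntegrable φD volume 0 t := by
    refine ContinuousOn.intervalIntegrable ?_
    exact (continuousOn_const.add (primCont gφ hgφI)).congr fun x _ => hφi x
  have hfDI : IntervalIntegrable fD volume 0 t := by
    refine ContinuousOn.intervalIntegrable ?_
    exact (continuousOn_const.add (primCont gf hgfI)).congr fun x _ => hfi x
  have hψDI : IntervalIntegrable ψD volume 0 t := hθDI.add (hφDI.const_mul m')
  -- four applications of integration by parts
  have A := parts t ht.le ψ ψD fD gf (fD 0) hψd hψDI hgfI (fun x _ => hfi x)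
  have B := parts t ht.le f fD ψD gψ (ψD 0) hfd hfDI hgψI hψDi
  have C := parts t ht.le θ θD φD gφ (φD 0) hθd hθDI hgφI (fun x _ => hφi x)
  have D := parts t ht.le φ φD θD gθ (θD 0) hφd hφDI hgθI (fun x _ => hθi x)
  -- Wronskian of θ, φ is constant = 1
  have hWr : θ t * φD t - φ t * θD t = 1 := by
    have hcomm : (∫ x in (0:ℝ)..t, θD x * φD x) = ∫ x in (0:ℝ)..t, φD x * θD x :=
      intervalIntegral.integral_congr fun x _ => mul_comm _ _
    have hzero : (∫ x in (0:ℝ)..t, θ x * gφ x) - (∫ x in (0:ℝ)..t, φ x * gθ x) = 0 := by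
      rw [← intervalIntegral.integral_sub (hgφI.continuousOn_mul hθc.continuousOn)
        (hgθI.continuousOn_mul hφc.continuousOn)]
      have h0 : ∀ x : ℝ, θ x * gφ x - φ x * gθ x = 0 := fun x => by
        simp only [hgθ, hgφ]; ring
      simp [h0]
    simp only [hθ0, hφ0, hθD0, hφD0] at C D
    linear_combination C - D + hcomm + hzero
  -- the q-integral
  have hcomm2 : (∫ x in (0:ℝ)..t, ψD x * fD x) = ∫ x in (0:ℝ)..t, fD x * ψD x :=
    intervalIntegral.integral_congr fun x _ => mul_comm _ _
  have hqint : (∫ x in (0:ℝ)..t, ψ x * gf x) - (∫ x in (0:ℝ)..t, f x * gψ x)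
      = ∫ x in (0:ℝ)..t, (q x : ℂ) * (θ x + m' * φ x) * f x := by
    rw [← intervalIntegral.integral_sub (hgfI.continuousOn_mul hψc.continuousOn)
      (hgψI.continuousOn_mul hfc.continuousOn)]
    refine intervalIntegral.integral_congr fun x _ => ?_
    simp only [hgf, hgψ, hψ]
    push_cast
    ring
  obtain ⟨hft, hfDt⟩ := hmatch t le_rfl
  simp only [hψ, hψDdef] at A B hcomm2 hqint
  simp only [hθ0, hφ0, hθD0, hφD0, hft, hfDt] at A B
  rw [hw]
  linear_combination B - A - hcomm2 - hqint + (m - m') * hWr
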